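/- (Closed-system recovery.) Suppose U = U_S ⊗ U_B where U_S is an n×n unitary, U_B is an m×m unitary, and U_B commutes with H_B. Then Φ(ρ) = U_S ρ U_S† for every n×n matrix ρ, and the guessed quantum heat vanishes: Q̃ = 0. -/

import Mathlib

open Matrix Kronecker BigOperators Finset

noncomputable section

/-- Partial trace over the bath (second tensor factor). -/
def ptraceB {n m : ℕ} (X : Matrix (Fin n × Fin m) (Fin n × Fin m) ℂ) :
    Matrix (Fin n) (Fin n) ℂ :=
  Matrix.of fun i i' => ∑ j, X (i, j) (i', j)

/-- Outer product `|v⟩⟨v|`. -/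
def outer {k : ℕ} (v : Fin k → ℂ) : Matrix (Fin k) (Fin k) ℂ :=
  Matrix.vecMulVec v (star v)

/-- Partition function `Z = Tr exp (−β H)` (real part of the trace). -/
def Zpart (β : ℝ) {k : ℕ} (H : Matrix (Fin k) (Fin k) ℂ) : ℝ :=
  (NormedSpace.exp ((-β) • H)).trace.re

/-- Gibbs state `exp (−β H) / Z`. -/
def gibbs (β : ℝ) {k : ℕ} (H : Matrix (Fin k) (Fin k) ℂ) : Matrix (Fin k) (Fin k) ℂ :=
  ((Zpart β H : ℂ)⁻¹) • NormedSpace.exp ((-β) • H)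

/-- The channel `Φ(ρ) = Tr_B [U (ρ ⊗ τB) U†]`. -/
def channel {n m : ℕ} (U : Matrix (Fin n × Fin m) (Fin n × Fin m) ℂ)
    (τB : Matrix (Fin m) (Fin m) ℂ) (ρ : Matrix (Fin n) (Fin n) ℂ) :
    Matrix (Fin n) (Fin n) ℂ :=
  ptraceB (U * (ρ ⊗ₖ τB) * Uᴴ)

lemma kron_conjTranspose {n m : ℕ} (A : Matrix (Fin n) (Fin n) ℂ)
    (B : Matrix (Fin m) (Fin m) ℂ) : (A ⊗ₖ B)ᴴ = Aᴴ ⊗ₖ Bᴴ := by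
  ext ⟨i, j⟩ ⟨i', j'⟩
  simp [conjTranspose_apply, kroneckerMap_apply, mul_comm]

lemma ptraceB_kron {n m : ℕ} (A : Matrix (Fin n) (Fin n) ℂ)
    (B : Matrix (Fin m) (Fin m) ℂ) : ptraceB (A ⊗ₖ B) = B.trace • A := by
  ext i i'
  simp [ptraceB, Matrix.trace, Matrix.smul_apply, kroneckerMap_apply, Matrix.diag,
    Finset.mul_sum, mul_comm]

lemma trace_exp_herm {k : ℕ} (A : Matrix (Fin k) (Fin k) ℂ) (hA : A.IsHermitian) :
    (NormedSpace.exp A).trace = ∑ j, (Real.exp (hA.eigenvalues j) : ℂ) := by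
  set V : Matrix (Fin k) (Fin k) ℂ := (hA.eigenvectorUnitary : Matrix (Fin k) (Fin k) ℂ)
  have hVmem : V ∈ Matrix.unitaryGroup (Fin k) ℂ := hA.eigenvectorUnitary.2
  have hVu : IsUnit V :=
    ⟨⟨V, star V, (Matrix.mem_unitaryGroup_iff).mp hVmem,
      (Matrix.mem_unitaryGroup_iff').mp hVmem⟩, rfl⟩
  have hVinv : V⁻¹ = star V := Matrix.inv_eq_left_inv ((Matrix.mem_unitaryGroup_iff').mp hVmem)
  have hspec : A = V * diagonal (RCLike.ofReal ∘ hA.eigenvalues) * V⁻¹ := by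
    rw [hVinv]; exact hA.spectral_theorem
  have hexp : NormedSpace.exp A
      = V * NormedSpace.exp (diagonal (RCLike.ofReal ∘ hA.eigenvalues)) * V⁻¹ := by
    conv_lhs => rw [hspec]
    exact Matrix.exp_conj _ _ hVu
  rw [hexp, Matrix.exp_diagonal, Matrix.trace_mul_cycle,
    Matrix.nonsing_inv_mul _ ((Matrix.isUnit_iff_isUnit_det V).mp hVu), Matrix.one_mul,
    Matrix.trace_diagonal]
  refine Finset.sum_congr rfl fun j _ => ?_
  simp [Function.comp, ← Complex.exp_eq_exp_ℂ, ← Complex.ofReal_exp]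

/-- auxiliary facts about the Gibbs state of a Hermitian Hamiltonian -/
lemma gibbs_trace_one {k : ℕ} (hk : 1 ≤ k) (β : ℝ)
    (H : Matrix (Fin k) (Fin k) ℂ) (hH : H.IsHermitian) :
    (gibbs β H).trace = 1 := by
  have hsmul : ((-β : ℝ) • H) = ((-β : ℝ) : ℂ) • H := by
    ext i j; simp [Matrix.smul_apply, Complex.real_smul]
  have hA : (((-β : ℝ) : ℂ) • H).IsHermitian := by
    simp [Matrix.IsHermitian, Matrix.conjTranspose_smul, hH.eq, Complex.conj_ofReal]
  have htr : (NormedSpace.exp ((-β : ℝ) • H)).trace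
      = ∑ j, (Real.exp (hA.eigenvalues j) : ℂ) := by
    rw [hsmul]; exact trace_exp_herm _ hA
  have hZ : Zpart β H = ∑ j, Real.exp (hA.eigenvalues j) := by
    rw [Zpart, htr, Complex.re_sum]
    simp only [Complex.ofReal_re]
  have hZpos : 0 < Zpart β H := by
    rw [hZ]
    exact Finset.sum_pos (fun j _ => Real.exp_pos _) ⟨⟨0, hk⟩, Finset.mem_univ _⟩
  rw [gibbs, Matrix.trace_smul, htr]
  have : (∑ j, (Real.exp (hA.eigenvalues j) : ℂ)) = ((Zpart β H : ℝ) : ℂ) := by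
    rw [hZ]; push_cast; ring
  rw [this, smul_eq_mul, inv_mul_cancel₀ (by exact_mod_cast hZpos.ne')]

lemma unitary_comm_gibbs {k : ℕ} (β : ℝ) (H W : Matrix (Fin k) (Fin k) ℂ)
    (hcomm : W * H = H * W) : W * gibbs β H = gibbs β H * W := by
  have h1 : Commute W ((-β : ℝ) • H) := (Commute.smul_right hcomm (-β))
  have h2 : Commute W (NormedSpace.exp ((-β : ℝ) • H)) := h1.exp_right
  rw [gibbs, Matrix.mul_smul, Matrix.smul_mul, h2.eq]

theorem closed_system_recovery
    (n m : ℕ) (hn : 1 ≤ n) (hm : 1 ≤ m)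
    (β : ℝ) (hβ : 0 < β)
    (HS0 HSt : Matrix (Fin n) (Fin n) ℂ)
    (hHS0 : HS0.IsHermitian) (hHSt : HSt.IsHermitian)
    (HB : Matrix (Fin m) (Fin m) ℂ) (hHB : HB.IsHermitian)
    (e : Fin n → Fin n → ℂ) (ε : Fin n → ℝ)
    (he : ∀ i i', ∑ x, (starRingEnd ℂ) (e i x) * e i' x = if i = i' then 1 else 0)
    (heig : ∀ i, HS0 *ᵥ e i = (ε i : ℂ) • e i)
    (U : Matrix (Fin n × Fin m) (Fin n × Fin m) ℂ)
    (hU : U ∈ Matrix.unitaryGroup (Fin n × Fin m) ℂ)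
    (E : Fin n → ℝ)
    (hE : ∀ i, E i = ((HSt * channel U (gibbs β HB) (outer (e i))).trace).re)
    (Zt : ℝ) (hZt : Zt = ∑ i, Real.exp (-(β * E i)))
    (p : Fin n → ℝ) (hp : ∀ i, p i = Real.exp (-(β * E i)) / Zt)
    (Θ : Matrix (Fin n × Fin m) (Fin n × Fin m) ℂ)
    (hΘ : Θ = ∑ i, (p i : ℂ) • (U * (outer (e i) ⊗ₖ gibbs β HB) * Uᴴ))
    (Qg : ℝ)
    (hQg : Qg = ((HB * gibbs β HB).trace).re
      - ((((1 : Matrix (Fin n) (Fin n) ℂ) ⊗ₖ HB) * Θ).trace).re)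
    (US : Matrix (Fin n) (Fin n) ℂ) (hUS : US ∈ Matrix.unitaryGroup (Fin n) ℂ)
    (UB : Matrix (Fin m) (Fin m) ℂ) (hUB : UB ∈ Matrix.unitaryGroup (Fin m) ℂ)
    (hUfact : U = US ⊗ₖ UB) (hUBcomm : UB * HB = HB * UB) :
    (∀ ρ : Matrix (Fin n) (Fin n) ℂ, channel U (gibbs β HB) ρ = US * ρ * USᴴ)
      ∧ Qg = 0 := by
  set τ : Matrix (Fin m) (Fin m) ℂ := gibbs β HB with hτ
  have hτtr : τ.trace = 1 := gibbs_trace_one hm β HB hHB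
  have hUBinv : UB * UBᴴ = 1 := by
    have h := (Matrix.mem_unitaryGroup_iff).mp hUB
    rwa [Matrix.star_eq_conjTranspose] at h
  have hUBτ : UB * τ * UBᴴ = τ := by
    rw [unitary_comm_gibbs β HB UB hUBcomm, Matrix.mul_assoc, hUBinv, Matrix.mul_one]
  -- conjugation formula
  have hconj : ∀ X : Matrix (Fin n) (Fin n) ℂ,
      U * (X ⊗ₖ τ) * Uᴴ = (US * X * USᴴ) ⊗ₖ τ := by
    intro X
    rw [hUfact, kron_conjTranspose, ← Matrix.mul_kronecker_mul, ← Matrix.mul_kronecker_mul,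
      hUBτ]
  have hchan : ∀ ρ : Matrix (Fin n) (Fin n) ℂ, channel U τ ρ = US * ρ * USᴴ := by
    intro ρ
    rw [channel, hconj, ptraceB_kron, hτtr, one_smul]
  refine ⟨hchan, ?_⟩
  -- sum of probabilities is one
  have hZtpos : 0 < Zt := by
    rw [hZt]
    exact Finset.sum_pos (fun j _ => Real.exp_pos _) ⟨⟨0, hn⟩, Finset.mem_univ _⟩
  have hpsum : ∑ i, p i = 1 := by
    simp only [hp]
    rw [← Finset.sum_div, ← hZt, div_self hZtpos.ne']
  -- trace of outer products
  have houter : ∀ i, (outer (e i)).trace = 1 := by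
    intro i
    have h1 := he i i
    simp only [if_true, eq_self_iff_true] at h1
    rw [Matrix.trace, ← h1]
    refine Finset.sum_congr rfl fun x _ => ?_
    simp [outer, Matrix.diag, Matrix.vecMulVec_apply, mul_comm]
  -- trace of conjugated outer products
  have hUSinv : USᴴ * US = 1 := by
    have h := (Matrix.mem_unitaryGroup_iff').mp hUS
    rwa [Matrix.star_eq_conjTranspose] at h
  have htrΘ : ((((1 : Matrix (Fin n) (Fin n) ℂ) ⊗ₖ HB) * Θ).trace) = (HB * τ).trace := by
    rw [hΘ, Finset.mul_sum, Matrix.trace_sum]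
    have hterm : ∀ i, (((1 : Matrix (Fin n) (Fin n) ℂ) ⊗ₖ HB) *
        ((p i : ℂ) • (U * (outer (e i) ⊗ₖ τ) * Uᴴ))).trace = (p i : ℂ) * (HB * τ).trace := by
      intro i
      rw [Matrix.mul_smul, Matrix.trace_smul, hconj, ← Matrix.mul_kronecker_mul,
        Matrix.one_mul, Matrix.trace_kronecker, smul_eq_mul]
      have : (US * outer (e i) * USᴴ).trace = 1 := by
        rw [Matrix.trace_mul_cycle, hUSinv, Matrix.one_mul, houter i]
      rw [this, one_mul]
    rw [Finset.sum_congr rfl fun i _ => hterm i, ← Finset.sum_mul]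
    have : (∑ i, (p i : ℂ)) = 1 := by
      rw [← Complex.ofReal_sum, hpsum, Complex.ofReal_one]
    rw [this, one_mul]
  rw [hQg, htrΘ, sub_self]
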